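/- Assume the event T_α holds for some 0 ≤ α < 1 and λ0 > 0. Let S ⊆ {1,…,p} be nonempty with s := |S| and φ(6,S) > 0, and choose the tuning parameter λ := λ0 · (φ²(6,S)/s)^{(1−α)/2}. Then ‖f̂ − f⁰‖_n² + λ‖β̂ − b^S‖₁ ≤ (343/6)·λ0²·(s/φ²(6,S))^{α} + 7‖ff_S − f⁰‖_n². -/

import Mathlib

open Finset

noncomputable section

/-- Squared normalized norm: `‖v‖ₙ² = ‖v‖₂²/n`. -/
def nsq (n : ℕ) (v : Fin n → ℝ) : ℝ := (∑ i, v i ^ 2) / n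

/-- Normalized norm `‖v‖ₙ`. -/
def nnorm (n : ℕ) (v : Fin n → ℝ) : ℝ := Real.sqrt (nsq n v)

/-- `ℓ₁`-norm of a coefficient vector. -/
def l1 {p : ℕ} (β : Fin p → ℝ) : ℝ := ∑ j, |β j|

/-- `f_β := ∑ⱼ βⱼ ψⱼ`. -/
def fvec {n p : ℕ} (ψ : Fin p → Fin n → ℝ) (β : Fin p → ℝ) : Fin n → ℝ :=
  fun i => ∑ j, β j * ψ j i

/-- Restriction `β_S` of `β` to an index set `S`. -/
def restr {p : ℕ} (S : Finset (Fin p)) (β : Fin p → ℝ) : Fin p → ℝ :=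
  fun j => if j ∈ S then β j else 0

/-- Compatibility constant `φ²(L,S)`. -/
def phiSq {n p : ℕ} (ψ : Fin p → Fin n → ℝ) (L : ℝ) (S : Finset (Fin p)) : ℝ :=
  sInf {x : ℝ | ∃ β : Fin p → ℝ, l1 (restr S β) = 1 ∧ l1 (β - restr S β) ≤ L ∧
    x = S.card * nsq n (fvec ψ (restr S β) - fvec ψ (β - restr S β))}

/-- Covering number `N(δ, F, ‖·‖ₙ)`. -/
def covN (n : ℕ) (δ : ℝ) (F : Set (Fin n → ℝ)) : ℕ :=
  sInf {N : ℕ | ∃ g : Fin N → (Fin n → ℝ), ∀ f ∈ F, ∃ k, nnorm n (f - g k) ≤ δ}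

lemma nsq_nonneg' (n : ℕ) (v : Fin n → ℝ) : 0 ≤ nsq n v :=
  div_nonneg (Finset.sum_nonneg fun i _ => sq_nonneg _) (by positivity)

lemma l1_nonneg' {p : ℕ} (β : Fin p → ℝ) : 0 ≤ l1 β :=
  Finset.sum_nonneg fun _ _ => abs_nonneg _

lemma sq_nnorm' (n : ℕ) (v : Fin n → ℝ) : nnorm n v ^ 2 = nsq n v :=
  Real.sq_sqrt (nsq_nonneg' n v)

lemma fvec_sub' {n p : ℕ} (ψ : Fin p → Fin n → ℝ) (β γ : Fin p → ℝ) :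
    fvec ψ (β - γ) = fvec ψ β - fvec ψ γ := by
  funext i
  simp [fvec, sub_mul, Finset.sum_sub_distrib]

lemma nnorm_sub_le' (n : ℕ) (hn : 0 < n) (x y : Fin n → ℝ) :
    nnorm n (x - y) ≤ nnorm n x + nnorm n y := by
  have hn' : (0:ℝ) < n := by exact_mod_cast hn
  have hP : (0:ℝ) ≤ ∑ i, x i ^ 2 := Finset.sum_nonneg fun i _ => sq_nonneg _
  have hQ : (0:ℝ) ≤ ∑ i, y i ^ 2 := Finset.sum_nonneg fun i _ => sq_nonneg _
  have hcs' : -(∑ i, x i * y i) ≤ Real.sqrt (∑ i, x i ^ 2) * Real.sqrt (∑ i, y i ^ 2) := by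
    have h := Real.sum_mul_le_sqrt_mul_sqrt univ x (fun i => -(y i))
    simp only [mul_neg, Finset.sum_neg_distrib, neg_sq] at h
    exact h
  have hrhs : (nnorm n x + nnorm n y) ^ 2 =
      ((∑ i, x i ^ 2) + 2*(Real.sqrt (∑ i, x i ^ 2) * Real.sqrt (∑ i, y i ^ 2)) + ∑ i, y i ^ 2)/n := by
    unfold nnorm nsq
    rw [Real.sqrt_div hP, Real.sqrt_div hQ]
    have hsn : Real.sqrt (n:ℝ) ^ 2 = (n:ℝ) := Real.sq_sqrt hn'.le
    have hsp : Real.sqrt (∑ i, x i ^ 2) ^ 2 = ∑ i, x i ^ 2 := Real.sq_sqrt hP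
    have hsq : Real.sqrt (∑ i, y i ^ 2) ^ 2 = ∑ i, y i ^ 2 := Real.sq_sqrt hQ
    have hsn0 : Real.sqrt (n:ℝ) ≠ 0 := by positivity
    field_simp
    nlinarith [hsn, hsp, hsq]
  have hlhs : nsq n (x - y) = ((∑ i, x i ^ 2) - 2*(∑ i, x i * y i) + ∑ i, y i ^ 2)/n := by
    unfold nsq
    congr 1
    rw [Finset.mul_sum, ← Finset.sum_sub_distrib, ← Finset.sum_add_distrib]
    exact Finset.sum_congr rfl fun i _ => by simp only [Pi.sub_apply]; ring
  have key : nsq n (x - y) ≤ (nnorm n x + nnorm n y) ^ 2 := by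
    rw [hlhs, hrhs]
    exact (div_le_div_iff_of_pos_right hn').2 (by linarith [hcs'])
  calc nnorm n (x - y) = Real.sqrt (nsq n (x - y)) := rfl
    _ ≤ Real.sqrt ((nnorm n x + nnorm n y)^2) := Real.sqrt_le_sqrt key
    _ = nnorm n x + nnorm n y := Real.sqrt_sq (add_nonneg (Real.sqrt_nonneg _) (Real.sqrt_nonneg _))

lemma gm_le_max' {x y α : ℝ} (hx : 0 ≤ x) (hy : 0 ≤ y) (hα0 : 0 ≤ α) (hα1 : α < 1) :
    x ^ (1 - α) * y ^ α ≤ max x y := by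
  have hxM : x ≤ max x y := le_max_left _ _
  have hyM : y ≤ max x y := le_max_right _ _
  have hM0 : 0 ≤ max x y := le_trans hx hxM
  rcases eq_or_lt_of_le hM0 with hM0' | hM0'
  · have hx0 : x = 0 := le_antisymm (hM0' ▸ hxM) hx
    rw [hx0, Real.zero_rpow (by linarith : (1:ℝ) - α ≠ 0), zero_mul]
    exact le_max_left 0 y
  · have h1 : x ^ (1 - α) ≤ (max x y) ^ (1 - α) := Real.rpow_le_rpow hx hxM (by linarith)
    have h2 : y ^ α ≤ (max x y) ^ α := Real.rpow_le_rpow hy hyM hα0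
    have h3 : (max x y) ^ (1 - α) * (max x y) ^ α = max x y := by
      rw [← Real.rpow_add hM0']
      norm_num
    calc x ^ (1 - α) * y ^ α ≤ (max x y) ^ (1 - α) * (max x y) ^ α :=
          mul_le_mul h1 h2 (Real.rpow_nonneg hy _) (Real.rpow_nonneg hM0 _)
      _ = max x y := h3

set_option maxHeartbeats 1000000 in
theorem stmt2 {n p : ℕ} (hn : 1 ≤ n) (hp : 1 ≤ p)
    (ψ : Fin p → Fin n → ℝ) (hψ : ∀ j, ∑ i, (ψ j i) ^ 2 ≤ (n : ℝ))
    (β0 : Fin p → ℝ) (ε : Fin n → ℝ)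
    (α lam0 lam : ℝ) (hα0 : 0 ≤ α) (hα1 : α < 1) (hlam0 : 0 < lam0)
    (S : Finset (Fin p)) (hSne : S.Nonempty) (hphi : 0 < phiSq ψ 6 S)
    (hlam : lam = lam0 * (phiSq ψ 6 S / S.card) ^ ((1 - α) / 2))
    (hT : ∀ β : Fin p → ℝ,
      4 * |∑ i, ε i * fvec ψ β i| / n ≤
        lam0 * nnorm n (fvec ψ β) ^ (1 - α) * l1 β ^ α)
    (hatβ : Fin p → ℝ)
    (hmin : ∀ β : Fin p → ℝ,
      (∑ i, (fvec ψ β0 i + ε i - fvec ψ hatβ i) ^ 2) / n + lam * l1 hatβ ≤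
        (∑ i, (fvec ψ β0 i + ε i - fvec ψ β i) ^ 2) / n + lam * l1 β)
    (bS : Fin p → ℝ) (hbS_supp : ∀ j, j ∉ S → bS j = 0)
    (hbS_proj : ∀ b : Fin p → ℝ, (∀ j, j ∉ S → b j = 0) →
      nsq n (fvec ψ bS - fvec ψ β0) ≤ nsq n (fvec ψ b - fvec ψ β0))
 :
    nsq n (fvec ψ hatβ - fvec ψ β0) + lam * l1 (hatβ - bS) ≤
      (343 / 6) * lam0 ^ 2 * ((S.card : ℝ) / phiSq ψ 6 S) ^ α
        + 7 * nsq n (fvec ψ bS - fvec ψ β0) := by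
  have hn' : (0:ℝ) < n := by exact_mod_cast hn
  set φ2 := phiSq ψ 6 S with hφ2
  have hs1 : (1:ℝ) ≤ S.card := by exact_mod_cast hSne.card_pos
  set t : ℝ := (S.card : ℝ) / φ2 with ht
  have ht0 : 0 < t := div_pos (by linarith) hphi
  set σ := Real.sqrt t with hσ
  have hσ0 : 0 < σ := Real.sqrt_pos.2 ht0
  have hσ2 : σ ^ 2 = t := Real.sq_sqrt ht0.le
  set δ : Fin p → ℝ := hatβ - bS with hδ
  set A := nsq n (fvec ψ hatβ - fvec ψ β0) with hA
  set Bq := nsq n (fvec ψ bS - fvec ψ β0) with hBq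
  set F := nnorm n (fvec ψ δ) with hF
  set D := l1 δ with hD
  set DS := ∑ j ∈ S, |δ j| with hDS
  set Dc := ∑ j ∈ Sᶜ, |δ j| with hDc
  have hA0 : 0 ≤ A := nsq_nonneg' _ _
  have hB0 : 0 ≤ Bq := nsq_nonneg' _ _
  have hF0 : 0 ≤ F := Real.sqrt_nonneg _
  have hDS0 : 0 ≤ DS := Finset.sum_nonneg fun j _ => abs_nonneg _
  have hDc0 : 0 ≤ Dc := Finset.sum_nonneg fun j _ => abs_nonneg _
  have hDsplit : DS + Dc = D := Finset.sum_add_sum_compl S fun j => |δ j|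
  have hD0 : 0 ≤ D := l1_nonneg' δ
  have hlamp : 0 < lam := by
    rw [hlam]
    exact mul_pos hlam0 (Real.rpow_pos_of_pos (div_pos hphi (by linarith)) _)
  set R := Real.sqrt A with hR
  set Bn := Real.sqrt Bq with hBn
  have hR0 : 0 ≤ R := Real.sqrt_nonneg _
  have hBn0 : 0 ≤ Bn := Real.sqrt_nonneg _
  have hR2 : R ^ 2 = A := Real.sq_sqrt hA0
  have hBn2 : Bn ^ 2 = Bq := Real.sq_sqrt hB0
  -- triangle: F ≤ R + Bn
  have htri : F ≤ R + Bn := by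
    have h1 : fvec ψ δ = (fvec ψ hatβ - fvec ψ β0) - (fvec ψ bS - fvec ψ β0) := by
      rw [hδ, fvec_sub']
      abel
    calc F = nnorm n ((fvec ψ hatβ - fvec ψ β0) - (fvec ψ bS - fvec ψ β0)) := by rw [hF, h1]
      _ ≤ nnorm n (fvec ψ hatβ - fvec ψ β0) + nnorm n (fvec ψ bS - fvec ψ β0) :=
          nnorm_sub_le' n hn _ _
      _ = R + Bn := rfl
  -- basic inequality
  have hbasic : A + lam * l1 hatβ ≤ Bq + lam * l1 bS + 2 * (∑ i, ε i * fvec ψ δ i) / n := by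
    have hm := hmin bS
    have expand : ∀ w : Fin p → ℝ, (∑ i, (fvec ψ β0 i + ε i - fvec ψ w i) ^ 2)
        = (∑ i, (fvec ψ w i - fvec ψ β0 i) ^ 2)
          - 2 * (∑ i, ε i * (fvec ψ w i - fvec ψ β0 i)) + ∑ i, (ε i) ^ 2 := by
      intro w
      rw [Finset.mul_sum, ← Finset.sum_sub_distrib, ← Finset.sum_add_distrib]
      exact Finset.sum_congr rfl fun i _ => by ring
    rw [expand hatβ, expand bS] at hm
    simp only [add_div, sub_div] at hm
    have hA' : A = (∑ i, (fvec ψ hatβ i - fvec ψ β0 i) ^ 2) / n := rfl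
    have hB' : Bq = (∑ i, (fvec ψ bS i - fvec ψ β0 i) ^ 2) / n := rfl
    have hsum : (∑ i, ε i * fvec ψ δ i)
        = (∑ i, ε i * (fvec ψ hatβ i - fvec ψ β0 i))
          - (∑ i, ε i * (fvec ψ bS i - fvec ψ β0 i)) := by
      rw [← Finset.sum_sub_distrib]
      refine Finset.sum_congr rfl fun i _ => ?_
      have h5 : fvec ψ δ i = fvec ψ hatβ i - fvec ψ bS i := by
        rw [hδ, fvec_sub']; rfl
      rw [h5]; ring
    have h2 : 2 * (∑ i, ε i * fvec ψ δ i) / n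
        = 2 * (∑ i, ε i * (fvec ψ hatβ i - fvec ψ β0 i)) / n
          - 2 * (∑ i, ε i * (fvec ψ bS i - fvec ψ β0 i)) / n := by
      rw [hsum]; ring
    rw [hA', hB', h2]
    linarith [hm]
  set M := max (σ * F) D with hMdef
  -- lam0 in terms of lam
  have hlam0eq : lam0 = lam * t ^ ((1 - α)/2) := by
    have htc : (0:ℝ) < t ^ ((1 - α)/2) := Real.rpow_pos_of_pos ht0 _
    have hinv : (φ2 / (S.card:ℝ)) = t⁻¹ := by rw [ht, inv_div]
    rw [hlam, hinv, Real.inv_rpow ht0.le]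
    field_simp
  have hσrpow : σ ^ ((1:ℝ) - α) = t ^ ((1 - α)/2) := by
    rw [hσ, Real.sqrt_eq_rpow, ← Real.rpow_mul ht0.le]
    congr 1
    ring
  have hmax : lam0 * F ^ (1 - α) * D ^ α ≤ lam * M := by
    have hgm : (σ * F) ^ (1 - α) * D ^ α ≤ M :=
      gm_le_max' (mul_nonneg hσ0.le hF0) hD0 hα0 hα1
    calc lam0 * F ^ (1 - α) * D ^ α
        = lam * (σ ^ ((1:ℝ) - α) * F ^ (1 - α)) * D ^ α := by
          rw [hlam0eq, hσrpow]; ring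
      _ = lam * ((σ * F) ^ (1 - α) * D ^ α) := by
          rw [Real.mul_rpow hσ0.le hF0]; ring
      _ ≤ lam * M := mul_le_mul_of_nonneg_left hgm hlamp.le
  have hEbound : 2 * (∑ i, ε i * fvec ψ δ i) / n ≤ lam * M / 2 := by
    have hεb := hT δ
    have hx : (∑ i, ε i * fvec ψ δ i) ≤ |∑ i, ε i * fvec ψ δ i| := le_abs_self _
    have h1 : 2 * (∑ i, ε i * fvec ψ δ i) / n ≤ 2 * |∑ i, ε i * fvec ψ δ i| / n :=
      (div_le_div_iff_of_pos_right hn').2 (by linarith)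
    have h2 : 2 * |∑ i, ε i * fvec ψ δ i| / n = (4 * |∑ i, ε i * fvec ψ δ i| / n) / 2 := by
      ring
    rw [h2] at h1
    linarith [hεb, hmax]
  -- l1 comparison
  have hl1 : l1 bS + Dc ≤ l1 hatβ + DS := by
    have hsplit1 : l1 bS = ∑ j ∈ S, |bS j| := by
      rw [show l1 bS = ∑ j ∈ S, |bS j| + ∑ j ∈ Sᶜ, |bS j| from
        (Finset.sum_add_sum_compl S fun j => |bS j|).symm]
      have hz : ∑ j ∈ Sᶜ, |bS j| = 0 :=
        Finset.sum_eq_zero fun j hj => by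
          rw [hbS_supp j (Finset.mem_compl.1 hj), abs_zero]
      rw [hz, add_zero]
    have hsplit2 : l1 hatβ = ∑ j ∈ S, |hatβ j| + Dc := by
      rw [show l1 hatβ = ∑ j ∈ S, |hatβ j| + ∑ j ∈ Sᶜ, |hatβ j| from
        (Finset.sum_add_sum_compl S fun j => |hatβ j|).symm]
      congr 1
      refine Finset.sum_congr rfl fun j hj => ?_
      have hb0 : bS j = 0 := hbS_supp j (Finset.mem_compl.1 hj)
      have h6 : δ j = hatβ j := by rw [hδ]; simp [hb0]
      rw [h6]
    have hterm : ∀ j ∈ S, |bS j| ≤ |hatβ j| + |δ j| := by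
      intro j _
      have hbj : bS j = hatβ j - δ j := by rw [hδ]; simp
      rw [hbj]
      exact abs_sub _ _
    have hsum := Finset.sum_le_sum hterm
    rw [Finset.sum_add_distrib] at hsum
    rw [hsplit1, hsplit2]
    linarith [hsum]
  -- star inequality
  have hstar : A + lam * Dc ≤ Bq + lam * M / 2 + lam * DS := by
    have hmul : lam * (l1 bS + Dc) ≤ lam * (l1 hatβ + DS) :=
      mul_le_mul_of_nonneg_left hl1 hlamp.le
    rw [mul_add, mul_add] at hmul
    linarith [hbasic, hEbound]
  -- compatibility
  have hcompat : 0 < DS → Dc ≤ 6 * DS → φ2 * DS ^ 2 ≤ (S.card : ℝ) * F ^ 2 := by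
    intro hDSpos hDc6
    set β : Fin p → ℝ := fun j => if j ∈ S then δ j / DS else -(δ j) / DS with hβ
    have hr : restr S β = fun j => if j ∈ S then δ j / DS else 0 := by
      funext j
      by_cases h : j ∈ S <;> simp [restr, hβ, h]
    have hl1r : l1 (restr S β) = 1 := by
      rw [hr]
      unfold l1
      have h1 : (∑ j, |if j ∈ S then δ j / DS else 0|)
          = ∑ j, if j ∈ S then |δ j| / DS else 0 := by
        refine Finset.sum_congr rfl fun j _ => ?_
        by_cases h : j ∈ S <;> simp [h, abs_div, abs_of_pos hDSpos]
      rw [h1, Finset.sum_ite_mem, Finset.univ_inter, ← Finset.sum_div, ← hDS,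
        div_self (ne_of_gt hDSpos)]
    have hrest : β - restr S β = fun j => if j ∈ S then 0 else -(δ j) / DS := by
      funext j
      by_cases h : j ∈ S <;> simp [restr, hβ, h]
    have hl1c : l1 (β - restr S β) ≤ 6 := by
      rw [hrest]
      unfold l1
      have h1 : (∑ j, |if j ∈ S then 0 else -(δ j) / DS|)
          = ∑ j, if j ∈ Sᶜ then |δ j| / DS else 0 := by
        refine Finset.sum_congr rfl fun j _ => ?_
        by_cases h : j ∈ S <;> simp [h, abs_div, abs_of_pos hDSpos]
      rw [h1, Finset.sum_ite_mem, Finset.univ_inter, ← Finset.sum_div, ← hDc,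
        div_le_iff₀ hDSpos]
      linarith
    have hvec : fvec ψ (restr S β) - fvec ψ (β - restr S β)
        = fun i => fvec ψ δ i / DS := by
      rw [← fvec_sub']
      have h7 : restr S β - (β - restr S β) = fun j => δ j / DS := by
        funext j
        by_cases h : j ∈ S <;> simp [restr, hβ, h, Pi.sub_apply] <;> ring
      rw [h7]
      funext i
      simp only [fvec]
      rw [Finset.sum_div]
      exact Finset.sum_congr rfl fun j _ => by ring
    have hnsq : nsq n (fvec ψ (restr S β) - fvec ψ (β - restr S β))
        = F ^ 2 / DS ^ 2 := by
      rw [hvec]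
      have h8 : nsq n (fun i => fvec ψ δ i / DS) = nsq n (fvec ψ δ) / DS ^ 2 := by
        unfold nsq
        show (∑ i, (fvec ψ δ i / DS) ^ 2) / (n:ℝ) = ((∑ i, fvec ψ δ i ^ 2) / (n:ℝ)) / DS ^ 2
        have hs : (∑ i, (fvec ψ δ i / DS) ^ 2) = (∑ i, fvec ψ δ i ^ 2) / DS ^ 2 := by
          rw [Finset.sum_div]
          exact Finset.sum_congr rfl fun i _ => by rw [div_pow]
        rw [hs, div_div, div_div]
        ring_nf
      rw [h8, sq_nnorm']
    have hmem : (S.card : ℝ) * (F ^ 2 / DS ^ 2) ∈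
        {x : ℝ | ∃ β : Fin p → ℝ, l1 (restr S β) = 1 ∧ l1 (β - restr S β) ≤ 6 ∧
          x = S.card * nsq n (fvec ψ (restr S β) - fvec ψ (β - restr S β))} :=
      ⟨β, hl1r, hl1c, by rw [hnsq]⟩
    have hbdd : BddBelow {x : ℝ | ∃ β : Fin p → ℝ, l1 (restr S β) = 1 ∧
        l1 (β - restr S β) ≤ 6 ∧
        x = S.card * nsq n (fvec ψ (restr S β) - fvec ψ (β - restr S β))} := by
      refine ⟨0, fun x hx => ?_⟩
      obtain ⟨b, _, _, hxe⟩ := hx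
      rw [hxe]
      exact mul_nonneg (Nat.cast_nonneg _) (nsq_nonneg' _ _)
    have hle : φ2 ≤ (S.card : ℝ) * (F ^ 2 / DS ^ 2) := csInf_le hbdd hmem
    have hDS2 : (0:ℝ) < DS ^ 2 := by positivity
    calc φ2 * DS ^ 2 ≤ ((S.card : ℝ) * (F ^ 2 / DS ^ 2)) * DS ^ 2 :=
          mul_le_mul_of_nonneg_right hle hDS2.le
      _ = (S.card : ℝ) * F ^ 2 := by rw [mul_assoc, div_mul_cancel₀ _ hDS2.ne']
  -- rewrite the target
  have hKeq : lam0 ^ 2 * t ^ α = lam ^ 2 * t := by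
    have h2c : t ^ ((1 - α)/2) * t ^ ((1 - α)/2) = t ^ ((1:ℝ) - α) := by
      rw [← Real.rpow_add ht0]
      congr 1
      ring
    have h3 : t ^ ((1:ℝ) - α) * t ^ α = t := by
      rw [← Real.rpow_add ht0]
      norm_num
    calc lam0 ^ 2 * t ^ α = (lam * t ^ ((1 - α)/2)) ^ 2 * t ^ α := by rw [hlam0eq]
      _ = lam ^ 2 * (t ^ ((1 - α)/2) * t ^ ((1 - α)/2)) * t ^ α := by ring
      _ = lam ^ 2 * (t ^ ((1:ℝ) - α) * t ^ α) := by rw [h2c]; ring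
      _ = lam ^ 2 * t := by rw [h3]
  have hgoal : A + lam * D ≤ 343 / 6 * (lam ^ 2 * t) + 7 * Bq := by
    set u := lam * σ with hu
    have hu0 : 0 ≤ u := mul_nonneg hlamp.le hσ0.le
    have hu2 : u ^ 2 = lam ^ 2 * t := by rw [hu, ← hσ2]; ring
    have hADd : lam * D = lam * DS + lam * Dc := by rw [← hDsplit]; ring
    have hlD : 0 ≤ lam * D := mul_nonneg hlamp.le hD0
    have hKnn : 0 ≤ lam ^ 2 * t := mul_nonneg (sq_nonneg _) ht0.le
    have hUF : lam * (σ * F) ≤ u * R + u * Bn := by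
      have h9 := mul_le_mul_of_nonneg_left htri hu0
      have h10 : u * (R + Bn) = u * R + u * Bn := by ring
      have h11 : lam * (σ * F) = u * F := by rw [hu]; ring
      linarith only [h9, h10, h11]
    rcases le_total D (σ * F) with hcase | hcase
    · -- Case 1 : M = σ F
      have hM1 : M = σ * F := max_eq_left hcase
      rw [hM1] at hstar
      have hDS_le : DS ≤ σ * F := le_trans (by linarith) hcase
      have h1 : lam * DS ≤ lam * (σ * F) := mul_le_mul_of_nonneg_left hDS_le hlamp.le
      have hchain : A + lam * D ≤ Bq + (5/2) * (u * R) + (5/2) * (u * Bn) := by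
        linarith only [hstar, h1, hUF, hADd]
      have hq1 : (5/2) * (u * R) ≤ (1/2) * A + (25/8) * (lam ^ 2 * t) := by
        nlinarith only [sq_nonneg (R - (5/2)*u), hR2, hu2]
      have hq2 : (5/2) * (u * Bn) ≤ Bq + (25/16) * (lam ^ 2 * t) := by
        nlinarith only [sq_nonneg (Bn - (5/4)*u), hBn2, hu2]
      linarith only [hchain, hq1, hq2, hlD, hB0, hKnn]
    · -- Case 2 : M = D
      have hM1 : M = D := max_eq_right hcase
      rw [hM1] at hstar
      by_cases h2a : lam * DS ≤ (2/3) * Bq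
      · linarith only [hstar, h2a, hA0, hADd, hB0, hKnn]
      · push_neg at h2a
        have h0 : 0 < lam * DS := lt_of_le_of_lt (by linarith only [hB0]) h2a
        have hDSpos : 0 < DS := by
          rcases mul_pos_iff.mp h0 with ⟨_, h⟩ | ⟨h, _⟩
          · exact h
          · linarith only [hlamp, h]
        have he6 : lam * (6 * DS) = 6 * (lam * DS) := by ring
        have h6 : lam * Dc ≤ lam * (6 * DS) := by
          linarith only [hstar, hADd, hA0, h2a, he6]
        have hDc6 : Dc ≤ 6 * DS := le_of_mul_le_mul_left h6 hlamp
        have hφDS := hcompat hDSpos hDc6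
        have hDS2 : DS ^ 2 ≤ σ ^ 2 * F ^ 2 := by
          rw [hσ2, ht]
          rw [div_mul_eq_mul_div, le_div_iff₀ hphi]
          linarith [hφDS]
        have hDSle : DS ≤ σ * F := by
          nlinarith only [hDS2, hDSpos, mul_nonneg hσ0.le hF0]
        have h1 : lam * DS ≤ lam * (σ * F) := mul_le_mul_of_nonneg_left hDSle hlamp.le
        have hchain : A + lam * D ≤ 2 * Bq + 4 * (u * R) + 4 * (u * Bn) := by
          linarith only [hstar, h1, hUF, hADd, hA0]
        have hq1 : 4 * (u * R) ≤ (1/2) * A + 8 * (lam ^ 2 * t) := by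
          nlinarith only [sq_nonneg (R - 4*u), hR2, hu2]
        have hq2 : 4 * (u * Bn) ≤ Bq + 4 * (lam ^ 2 * t) := by
          nlinarith only [sq_nonneg (Bn - 2*u), hBn2, hu2]
        linarith only [hchain, hq1, hq2, hlD, hB0, hKnn]
  calc A + lam * D ≤ 343 / 6 * (lam ^ 2 * t) + 7 * Bq := hgoal
    _ = 343 / 6 * lam0 ^ 2 * t ^ α + 7 * Bq := by rw [← hKeq]; ring
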